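/- Under the quadcopter translational dynamics with z₄ = tan(ψ/2) and z̈ + g > 0, the pitch angle satisfies tan θ = ((1−z₄²)ẍ + 2z₄ÿ) / ((1+z₄²)(z̈+g)). -/

import Mathlib

open Real

theorem stmt_4 (x'' y'' z'' φ θ ψ T m g z₄ : ℝ)
    (hT : 0 < T) (hm : 0 < m) (hφ : 0 < cos φ) (hθ : 0 < cos θ)
    (hzg : 0 < z'' + g)
    (hψ : ψ ∈ Set.Ioo (-π) π) (hz4 : z₄ = tan (ψ / 2))
    (hx : m * x'' = T * (cos φ * sin θ * cos ψ + sin φ * sin ψ))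
    (hy : m * y'' = T * (cos φ * sin θ * sin ψ - sin φ * cos ψ))
    (hz : m * (z'' + g) = T * (cos φ * cos θ)) :
    tan θ = ((1 - z₄ ^ 2) * x'' + 2 * z₄ * y'') / ((1 + z₄ ^ 2) * (z'' + g)) := by
  obtain ⟨h1ψ, h2ψ⟩ := hψ
  have hc : 0 < cos (ψ / 2) :=
    Real.cos_pos_of_mem_Ioo ⟨by linarith, by linarith⟩
  have hsc : sin (ψ / 2) ^ 2 + cos (ψ / 2) ^ 2 = 1 := sin_sq_add_cos_sq _
  have hcψ : cos ψ = cos (ψ / 2) ^ 2 - sin (ψ / 2) ^ 2 := by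
    have h := cos_two_mul (ψ / 2)
    have h2 := sin_sq_add_cos_sq (ψ / 2)
    rw [show 2 * (ψ / 2) = ψ by ring] at h
    linarith
  have hsψ : sin ψ = 2 * sin (ψ / 2) * cos (ψ / 2) := by
    have h := sin_two_mul (ψ / 2)
    rw [show 2 * (ψ / 2) = ψ by ring] at h
    linarith
  rw [tan_eq_sin_div_cos] at hz4
  have hcne : cos (ψ / 2) ≠ 0 := ne_of_gt hc
  have h1 : m * (cos ψ * x'' + sin ψ * y'') = T * (cos φ * sin θ) := by
    linear_combination cos ψ * hx + sin ψ * hy +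
      T * (cos φ * sin θ) * (sin_sq_add_cos_sq ψ)
  have h3 : m * (cos θ * (cos ψ * x'' + sin ψ * y'') - sin θ * (z'' + g)) = 0 := by
    linear_combination cos θ * h1 - sin θ * hz
  have h2 : sin θ * (z'' + g) = cos θ * (cos ψ * x'' + sin ψ * y'') := by
    rcases mul_eq_zero.mp h3 with h | h
    · exact absurd h (ne_of_gt hm)
    · linarith
  have hnum : (1 - z₄ ^ 2) * x'' + 2 * z₄ * y''
      = (1 + z₄ ^ 2) * (cos ψ * x'' + sin ψ * y'') := by
    rw [hz4, hcψ, hsψ]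
    field_simp
    ring_nf
    have hsc' : sin (ψ * (1 / 2)) ^ 2 + cos (ψ * (1 / 2)) ^ 2 = 1 := sin_sq_add_cos_sq _
    linear_combination (-(cos (ψ * (1 / 2)) * sin (ψ * (1 / 2)) * y'' * 2 + cos (ψ * (1 / 2)) ^ 2 * x'' - sin (ψ * (1 / 2)) ^ 2 * x'')) * hsc'
  have hden : (0:ℝ) < (1 + z₄ ^ 2) * (z'' + g) := by positivity
  rw [hnum, tan_eq_sin_div_cos, div_eq_div_iff (ne_of_gt hθ) (ne_of_gt hden)]
  linear_combination (1 + z₄ ^ 2) * h2
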